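/- Let M ≥ 1 and let F be a 2M×2M complex Hermitian matrix, written in block form F = [[F₁₁, F₁₂],[F₂₁, F₂₂]] with M×M blocks, such that I_{2M} − F is invertible, and set G = (I_{2M} − F)⁻¹ − (1/2)·I_{2M}. Then the two conditions (G is positive definite, and G + (1/2)·diag(I_M, −I_M) is positive semidefinite) hold if and only if the spectral norm of F is strictly less than 1 and F₂₂ is positive semidefinite. -/

import Mathlib

open scoped Matrix.Norms.L2Operator ComplexOrder

namespace Stmt1Aux

open Matrix

variable {n : Type*} [Fintype n] [DecidableEq n]

lemma quad_eq (X : Matrix n n ℂ) (x : EuclideanSpace ℂ n) :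
    star (WithLp.equiv 2 (n → ℂ) x) ⬝ᵥ ((1 - Xᴴ * X) *ᵥ WithLp.equiv 2 (n → ℂ) x) =
      ((‖x‖ ^ 2 - ‖Matrix.toEuclideanLin X x‖ ^ 2 : ℝ) : ℂ) := by
  set v := WithLp.equiv 2 (n → ℂ) x with hv
  have hvv : star v ⬝ᵥ v = (‖x‖ : ℂ) ^ 2 := by
    rw [dotProduct_comm]
    exact inner_self_eq_norm_sq_to_K (𝕜 := ℂ) x
  have h1 : star v ⬝ᵥ ((Xᴴ * X) *ᵥ v) = (‖Matrix.toEuclideanLin X x‖ : ℂ) ^ 2 := by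
    have e1 : star v ⬝ᵥ ((Xᴴ * X) *ᵥ v) = star (X *ᵥ v) ⬝ᵥ (X *ᵥ v) := by
      rw [← Matrix.mulVec_mulVec, Matrix.dotProduct_mulVec, Matrix.star_mulVec]
    rw [e1, dotProduct_comm]
    exact inner_self_eq_norm_sq_to_K (𝕜 := ℂ) (Matrix.toEuclideanLin X x)
  rw [Matrix.sub_mulVec, dotProduct_sub, Matrix.one_mulVec, hvv, h1]
  push_cast
  norm_num

lemma posSemidef_one_sub_iff (X : Matrix n n ℂ) :
    (1 - Xᴴ * X).PosSemidef ↔ ‖X‖ ≤ 1 := by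
  have herm : (1 - Xᴴ * X).IsHermitian :=
    Matrix.isHermitian_one.sub (Matrix.isHermitian_conjTranspose_mul_self X)
  have hTnorm : ‖X‖ = ‖LinearMap.toContinuousLinearMap (Matrix.toEuclideanLin X)‖ :=
    Matrix.l2_opNorm_def X
  constructor
  · intro h
    rw [hTnorm]
    refine ContinuousLinearMap.opNorm_le_bound _ zero_le_one fun x => ?_
    have h2 := (Matrix.posSemidef_iff_dotProduct_mulVec.mp h).2 (WithLp.equiv 2 (n → ℂ) x)
    rw [quad_eq, Complex.zero_le_real] at h2
    have h3 : ‖Matrix.toEuclideanLin X x‖ ^ 2 ≤ ‖x‖ ^ 2 := by linarith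
    have h4 : ‖Matrix.toEuclideanLin X x‖ ≤ ‖x‖ := by
      nlinarith [norm_nonneg (Matrix.toEuclideanLin X x), norm_nonneg x]
    rw [one_mul]
    exact h4
  · intro h
    refine Matrix.posSemidef_iff_dotProduct_mulVec.mpr ⟨herm, fun v => ?_⟩
    have hq := quad_eq X ((WithLp.equiv 2 (n → ℂ)).symm v)
    rw [Equiv.apply_symm_apply] at hq
    rw [hq, Complex.zero_le_real]
    set x := (WithLp.equiv 2 (n → ℂ)).symm v with hxdef
    have h1 : ‖Matrix.toEuclideanLin X x‖ ≤ ‖X‖ * ‖x‖ := by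
      rw [hTnorm]
      exact (LinearMap.toContinuousLinearMap (Matrix.toEuclideanLin X)).le_opNorm x
    have h2 : ‖Matrix.toEuclideanLin X x‖ ≤ ‖x‖ := by
      refine h1.trans ?_
      calc ‖X‖ * ‖x‖ ≤ 1 * ‖x‖ := mul_le_mul_of_nonneg_right h (norm_nonneg _)
      _ = ‖x‖ := one_mul _
    have h3 := mul_self_le_mul_self (norm_nonneg (Matrix.toEuclideanLin X x)) h2
    nlinarith [norm_nonneg (Matrix.toEuclideanLin X x)]

lemma posDef_one_sub_iff [Nonempty n] (X : Matrix n n ℂ) :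
    (1 - Xᴴ * X).PosDef ↔ ‖X‖ < 1 := by
  have herm : (1 - Xᴴ * X).IsHermitian :=
    Matrix.isHermitian_one.sub (Matrix.isHermitian_conjTranspose_mul_self X)
  set T : EuclideanSpace ℂ n →L[ℂ] EuclideanSpace ℂ n :=
    LinearMap.toContinuousLinearMap (Matrix.toEuclideanLin X) with hTdef
  have hTnorm : ‖X‖ = ‖T‖ := Matrix.l2_opNorm_def X
  have hT : ∀ x, T x = Matrix.toEuclideanLin X x := fun _ => rfl
  constructor
  · intro h
    obtain ⟨x₀, hx₀S, hmax⟩ := (isCompact_sphere (0 : EuclideanSpace ℂ n) 1).exists_isMaxOn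
      (NormedSpace.sphere_nonempty.mpr zero_le_one) (T.continuous.norm.continuousOn)
    have hx₀norm : ‖x₀‖ = 1 := by simpa using mem_sphere_zero_iff_norm.mp hx₀S
    have hx₀ne : x₀ ≠ 0 := by
      intro h0; rw [h0, norm_zero] at hx₀norm; norm_num at hx₀norm
    have hvne : WithLp.equiv 2 (n → ℂ) x₀ ≠ 0 := by
      intro h0
      exact hx₀ne ((WithLp.equiv 2 (n → ℂ)).injective (by simpa using h0))
    have hq := (Matrix.posDef_iff_dotProduct_mulVec.mp h).2 hvne
    rw [quad_eq, Complex.zero_lt_real] at hq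
    rw [← hT x₀, hx₀norm] at hq
    have hclt : ‖T x₀‖ < 1 := by nlinarith [norm_nonneg (T x₀)]
    have hbound : ∀ x, ‖T x‖ ≤ ‖T x₀‖ * ‖x‖ := by
      intro x
      rcases eq_or_ne x 0 with rfl | hx
      · simp
      · have hnx : 0 < ‖x‖ := norm_pos_iff.mpr hx
        have hu : (((‖x‖⁻¹ : ℝ) : ℂ) • x) ∈ Metric.sphere (0 : EuclideanSpace ℂ n) 1 := by
          rw [mem_sphere_zero_iff_norm, norm_smul, Complex.norm_real, Real.norm_eq_abs,
            abs_of_pos (inv_pos.mpr hnx), inv_mul_cancel₀ hnx.ne']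
        have hle := hmax hu
        simp only [Set.mem_setOf_eq, _root_.map_smul, norm_smul, Complex.norm_real,
          norm_norm, abs_of_pos (inv_pos.mpr hnx), Real.norm_eq_abs] at hle
        calc ‖T x‖ = ‖x‖ * (‖x‖⁻¹ * ‖T x‖) := by field_simp
        _ ≤ ‖x‖ * ‖T x₀‖ := mul_le_mul_of_nonneg_left hle hnx.le
        _ = ‖T x₀‖ * ‖x‖ := mul_comm _ _
    rw [hTnorm]
    exact lt_of_le_of_lt (T.opNorm_le_bound (norm_nonneg _) hbound) hclt
  · intro h
    refine Matrix.posDef_iff_dotProduct_mulVec.mpr ⟨herm, fun v hv => ?_⟩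
    have hq := quad_eq X ((WithLp.equiv 2 (n → ℂ)).symm v)
    rw [Equiv.apply_symm_apply] at hq
    rw [hq, Complex.zero_lt_real]
    set x := (WithLp.equiv 2 (n → ℂ)).symm v with hxdef
    have hxne : x ≠ 0 := by
      intro h0
      apply hv
      have := congrArg (WithLp.equiv 2 (n → ℂ)) h0
      rw [hxdef] at this
      simpa using this
    have hnx : 0 < ‖x‖ := norm_pos_iff.mpr hxne
    have h1 : ‖Matrix.toEuclideanLin X x‖ ≤ ‖X‖ * ‖x‖ := by
      rw [hTnorm]; exact T.le_opNorm x
    have h3 : ‖Matrix.toEuclideanLin X x‖ < ‖x‖ := by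
      refine lt_of_le_of_lt h1 ?_
      calc ‖X‖ * ‖x‖ < 1 * ‖x‖ := mul_lt_mul_of_pos_right h hnx
      _ = ‖x‖ := one_mul _
    nlinarith [norm_nonneg (Matrix.toEuclideanLin X x)]

lemma posDef_conj {A : Matrix n n ℂ} (hA : A.PosDef) {B : Matrix n n ℂ} (hB : IsUnit B) :
    (Bᴴ * A * B).PosDef := by
  refine Matrix.posDef_iff_dotProduct_mulVec.mpr ⟨Matrix.isHermitian_conjTranspose_mul_mul B hA.1, fun x hx => ?_⟩
  have hBx : B *ᵥ x ≠ 0 := by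
    intro h0
    exact hx ((Matrix.mulVec_injective_iff_isUnit.mpr hB) (by simpa using h0))
  simpa only [Matrix.star_mulVec, Matrix.dotProduct_mulVec, Matrix.vecMul_vecMul] using
    (Matrix.posDef_iff_dotProduct_mulVec.mp hA).2 hBx

lemma posDef_mul_conj_iff {A B : Matrix n n ℂ} (hB : IsUnit B) (hBh : B.IsHermitian) :
    (B * A * B).PosDef ↔ A.PosDef := by
  have hdet : IsUnit B.det := (Matrix.isUnit_iff_isUnit_det _).mp hB
  constructor
  · intro h
    have h2 := posDef_conj h (Matrix.isUnit_nonsing_inv_iff.mpr hB) (B := B⁻¹)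
    rw [Matrix.conjTranspose_nonsing_inv, hBh.eq] at h2
    have e : B⁻¹ * (B * A * B) * B⁻¹ = A := by
      rw [show B⁻¹ * (B * A * B) * B⁻¹ = (B⁻¹ * B) * A * (B * B⁻¹) by noncomm_ring,
        Matrix.nonsing_inv_mul _ hdet, Matrix.mul_nonsing_inv _ hdet, one_mul, mul_one]
    rwa [e] at h2
  · intro h
    have h2 := posDef_conj h hB (B := B)
    rwa [hBh.eq] at h2

lemma posSemidef_mul_conj_iff {A B : Matrix n n ℂ} (hB : IsUnit B) (hBh : B.IsHermitian) :
    (B * A * B).PosSemidef ↔ A.PosSemidef := by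
  have hdet : IsUnit B.det := (Matrix.isUnit_iff_isUnit_det _).mp hB
  constructor
  · intro h
    have h2 := h.conjTranspose_mul_mul_same B⁻¹
    rw [Matrix.conjTranspose_nonsing_inv, hBh.eq] at h2
    have e : B⁻¹ * (B * A * B) * B⁻¹ = A := by
      rw [show B⁻¹ * (B * A * B) * B⁻¹ = (B⁻¹ * B) * A * (B * B⁻¹) by noncomm_ring,
        Matrix.nonsing_inv_mul _ hdet, Matrix.mul_nonsing_inv _ hdet, one_mul, mul_one]
    rwa [e] at h2
  · intro h
    have h2 := h.conjTranspose_mul_mul_same B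
    rwa [hBh.eq] at h2

lemma posDef_half_smul_iff {A : Matrix n n ℂ} : ((1/2 : ℂ) • A).PosDef ↔ A.PosDef := by
  have hstar : star (1/2 : ℂ) = (1/2 : ℂ) := by simp
  have hhalf : (0 : ℂ) < 1/2 := by
    rw [show ((1:ℂ)/2) = (((1:ℝ)/2 : ℝ) : ℂ) by push_cast; ring, Complex.zero_lt_real]
    norm_num
  have key : ∀ (x : n → ℂ), star x ⬝ᵥ (((1/2 : ℂ) • A) *ᵥ x)
      = (1/2 : ℂ) * (star x ⬝ᵥ (A *ᵥ x)) := by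
    intro x
    rw [Matrix.smul_mulVec, dotProduct_smul, smul_eq_mul]
  constructor
  · intro h
    have hherm : A.IsHermitian := by
      have h1 := h.1.eq
      rw [Matrix.conjTranspose_smul, hstar] at h1
      exact smul_right_injective _ (by norm_num : (1/2 : ℂ) ≠ 0) h1
    refine Matrix.posDef_iff_dotProduct_mulVec.mpr ⟨hherm, fun x hx => ?_⟩
    have h2 := (Matrix.posDef_iff_dotProduct_mulVec.mp h).2 hx
    rw [key] at h2
    have htwo : (0 : ℂ) < 2 := by
      rw [show (2 : ℂ) = ((2 : ℝ) : ℂ) by push_cast; ring, Complex.zero_lt_real]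
      norm_num
    have h3 := mul_pos htwo h2
    rwa [show (2 : ℂ) * (1/2 * (star x ⬝ᵥ A *ᵥ x)) = star x ⬝ᵥ A *ᵥ x by ring] at h3
  · intro h
    refine Matrix.posDef_iff_dotProduct_mulVec.mpr ⟨by rw [Matrix.IsHermitian, Matrix.conjTranspose_smul, hstar, h.1.eq],
      fun x hx => ?_⟩
    rw [key]
    exact mul_pos hhalf ((Matrix.posDef_iff_dotProduct_mulVec.mp h).2 hx)

end Stmt1Aux

open scoped MatrixOrder in
open Matrix in
theorem stmt_1 (M : ℕ) (hM : 1 ≤ M)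
    (F₁₁ F₁₂ F₂₁ F₂₂ : Matrix (Fin M) (Fin M) ℂ)
    (F : Matrix (Fin M ⊕ Fin M) (Fin M ⊕ Fin M) ℂ)
    (hFblocks : F = Matrix.fromBlocks F₁₁ F₁₂ F₂₁ F₂₂)
    (hF : F.IsHermitian) (hInv : IsUnit (1 - F))
    (G : Matrix (Fin M ⊕ Fin M) (Fin M ⊕ Fin M) ℂ)
    (hG : G = (1 - F)⁻¹ - (1 / 2 : ℂ) • 1) :
    (G.PosDef ∧
        (G + (1 / 2 : ℂ) • Matrix.fromBlocks 1 0 0 (-1)).PosSemidef) ↔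
      ‖F‖ < 1 ∧ F₂₂.PosSemidef := by
  have hNE : Nonempty (Fin M ⊕ Fin M) := ⟨Sum.inl ⟨0, hM⟩⟩
  have hFH : Fᴴ = F := hF.eq
  have hdet : IsUnit (1 - F).det := (Matrix.isUnit_iff_isUnit_det _).mp hInv
  have hAinv : (1 - F) * (1 - F)⁻¹ = 1 := Matrix.mul_nonsing_inv _ hdet
  have hAherm : (1 - F).IsHermitian := Matrix.isHermitian_one.sub hF
  have hKey : (1 - F) * G * (1 - F) = (1/2 : ℂ) • (1 - Fᴴ * F) := by
    rw [hG, hFH]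
    have e1 : (1 - F) * ((1 - F)⁻¹ - (1/2 : ℂ) • 1) = 1 - (1/2 : ℂ) • (1 - F) := by
      rw [mul_sub, hAinv, mul_smul_comm, mul_one]
    rw [e1]
    have e2 : (1 - (1/2 : ℂ) • (1 - F)) * (1 - F) = (1 - F) - (1/2 : ℂ) • ((1 - F) * (1 - F)) := by
      rw [sub_mul, one_mul, smul_mul_assoc]
    rw [e2, show (1 - F) * (1 - F) = 1 - F - F + F * F from by noncomm_ring]
    module
  have step1 : G.PosDef ↔ ‖F‖ < 1 := by
    rw [← Stmt1Aux.posDef_mul_conj_iff hInv hAherm (A := G), hKey,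
      Stmt1Aux.posDef_half_smul_iff, Stmt1Aux.posDef_one_sub_iff]
  have step2 : ‖F‖ < 1 →
      ((G + (1 / 2 : ℂ) • Matrix.fromBlocks 1 0 0 (-1)).PosSemidef ↔ F₂₂.PosSemidef) := by
    intro hn
    have hGpd : G.PosDef := step1.mpr hn
    have hApd : (1 - F).PosDef := by
      rw [← Matrix.posDef_inv_iff]
      have h1 : (1 - F)⁻¹ = G + (1/2 : ℂ) • 1 := by rw [hG]; abel
      rw [h1]
      exact hGpd.add_posSemidef (Stmt1Aux.posDef_half_smul_iff.mpr Matrix.PosDef.one).posSemidef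
    set P : Matrix (Fin M ⊕ Fin M) (Fin M ⊕ Fin M) ℂ := Matrix.fromBlocks 0 0 0 1 with hP
    have hPh : Pᴴ = P := by
      rw [hP, Matrix.fromBlocks_conjTranspose]
      simp
    have hPP : P * P = P := by
      rw [hP, Matrix.fromBlocks_multiply]
      simp
    set S : Matrix (Fin M ⊕ Fin M) (Fin M ⊕ Fin M) ℂ := CFC.sqrt (1 - F) with hSdef
    have hSps : Matrix.PosSemidef S := (CFC.sqrt_nonneg (1 - F)).posSemidef
    have hSh : S.IsHermitian := hSps.1
    have hSS : S * S = 1 - F := CFC.sqrt_mul_sqrt_self (1 - F) hApd.posSemidef.nonneg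
    have hSunit : IsUnit S := by
      rw [Matrix.isUnit_iff_isUnit_det]
      refine isUnit_of_mul_isUnit_left (y := S.det) ?_
      rw [← Matrix.det_mul, hSS]
      exact hdet
    have hSdet : IsUnit S.det := (Matrix.isUnit_iff_isUnit_det _).mp hSunit
    have hEq : G + (1/2 : ℂ) • Matrix.fromBlocks 1 0 0 (-1) = (1 - F)⁻¹ - P := by
      rw [hG, hP, ← Matrix.fromBlocks_one (l := Fin M) (m := Fin M) (α := ℂ),
        Matrix.fromBlocks_smul, Matrix.fromBlocks_smul]
      ext (i | i) (j | j) <;>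
        simp [Matrix.sub_apply, Matrix.add_apply, Matrix.smul_apply, smul_eq_mul] <;> ring
    rw [hEq, ← Stmt1Aux.posSemidef_mul_conj_iff hSunit hSh (A := (1 - F)⁻¹ - P)]
    have hSinv : S * (1 - F)⁻¹ * S = 1 := by
      rw [← hSS, Matrix.mul_inv_rev,
        show S * (S⁻¹ * S⁻¹) * S = (S * S⁻¹) * (S⁻¹ * S) by noncomm_ring,
        Matrix.mul_nonsing_inv _ hSdet, Matrix.nonsing_inv_mul _ hSdet, one_mul]
    have h2 : (P * S)ᴴ * (P * S) = S * P * S := by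
      rw [Matrix.conjTranspose_mul, hSh.eq, hPh,
        show S * P * (P * S) = S * (P * P) * S by noncomm_ring, hPP]
    have hmid : S * ((1 - F)⁻¹ - P) * S = 1 - (P * S)ᴴ * (P * S) := by
      rw [h2, mul_sub, sub_mul, hSinv]
    rw [hmid, Stmt1Aux.posSemidef_one_sub_iff, ← Matrix.l2_opNorm_conjTranspose (P * S),
      show (P * S)ᴴ = S * P by rw [Matrix.conjTranspose_mul, hSh.eq, hPh],
      ← Stmt1Aux.posSemidef_one_sub_iff]
    have h3 : (S * P)ᴴ * (S * P) = P * (1 - F) * P := by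
      rw [Matrix.conjTranspose_mul, hSh.eq, hPh, ← hSS]
      noncomm_ring
    rw [h3]
    have h4 : 1 - P * (1 - F) * P = Matrix.fromBlocks 1 0 0 F₂₂ := by
      rw [hFblocks, hP, ← Matrix.fromBlocks_one (l := Fin M) (m := Fin M) (α := ℂ)]
      simp only [sub_eq_add_neg, Matrix.fromBlocks_neg, Matrix.fromBlocks_add,
        Matrix.fromBlocks_multiply]
      rw [Matrix.fromBlocks_inj]
      refine ⟨by noncomm_ring, by noncomm_ring, by noncomm_ring, by noncomm_ring⟩
    rw [h4]
    haveI : Invertible (1 : Matrix (Fin M) (Fin M) ℂ) := invertibleOne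
    have h5 := Matrix.PosDef.fromBlocks₁₁ (A := (1 : Matrix (Fin M) (Fin M) ℂ))
      (0 : Matrix (Fin M) (Fin M) ℂ) F₂₂ Matrix.PosDef.one
    simp only [Matrix.conjTranspose_zero, Matrix.mul_zero, Matrix.zero_mul, sub_zero] at h5
    exact h5
  constructor
  · rintro ⟨hGpd, hpsd⟩
    have hn := step1.mp hGpd
    exact ⟨hn, (step2 hn).mp hpsd⟩
  · rintro ⟨hn, hpsd⟩
    exact ⟨step1.mpr hn, (step2 hn).mpr hpsd⟩
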